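/- Let n ≥ 2 and let λ = (λ_1 ≥ λ_2 ≥ … ≥ λ_{n−1} ≥ 0) be an integer partition of length n−1, with the convention λ_n = 0 and |λ| = λ_1 + … + λ_{n−1}. Define D^λ = ∏_{1≤i<j≤n} (λ_i−λ_j+j−i)/(j−i) and B_n(λ) = (1/n)·(−|λ|²/n + ∑_{i=1}^{n−1} (λ_i² + (n+1−2i)·λ_i)). Then D^λ ≤ (3/2)·n^{B_n(λ)}. -/

import Mathlib

section AuxSU9
open Finset Real

/-- log((x+d)/d) ≤ x·log((d+1)/d) for nat x, d ≥ 1 -/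
lemma log_ratio_le (d : ℕ) (hd : 1 ≤ d) (x : ℕ) :
    Real.log (x + d) - Real.log d ≤ x * (Real.log (d+1) - Real.log d) := by
  induction x with
  | zero => simp
  | succ x ih =>
    have hd0 : (0:ℝ) < d := by exact_mod_cast hd
    have hxd : (0:ℝ) < (x:ℝ) + d := by positivity
    have key : Real.log ((x+1:ℕ) + d) ≤ Real.log (x + d) + (Real.log (d+1) - Real.log d) := by
      have h1 : ((x+1:ℕ):ℝ) + d ≤ ((x:ℝ) + d) * ((d:ℝ)+1) / d := by
        rw [le_div_iff₀ hd0]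
        push_cast
        nlinarith [Nat.cast_nonneg (α := ℝ) x]
      have h2 : Real.log (((x:ℝ) + d) * ((d:ℝ)+1) / d)
          = Real.log (x + d) + Real.log (d+1) - Real.log d := by
        rw [Real.log_div (by positivity) (by positivity), Real.log_mul (by positivity) (by positivity)]
      calc Real.log ((x+1:ℕ) + d) ≤ Real.log (((x:ℝ) + d) * ((d:ℝ)+1) / d) :=
            Real.log_le_log (by positivity) h1
        _ = _ := by rw [h2]; ring
    push_cast at key ⊢
    linarith

lemma int_max_bound (β γ : ℝ) (hγ : 0 ≤ γ) (h3 : β ≤ 3*γ) (g : ℕ) :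
    β*g - γ*(g:ℝ)^2 ≤ max 0 (β - γ) := by
  match g with
  | 0 => simpa using le_max_left 0 (β - γ)
  | 1 => simpa using le_max_right 0 (β - γ)
  | (g+2) =>
    refine le_trans ?_ (le_max_right 0 (β - γ))
    have hg : (2:ℝ) ≤ ((g+2:ℕ):ℝ) := by exact_mod_cast Nat.le_add_left 2 g
    nlinarith [mul_nonneg hγ (mul_nonneg (by linarith : (0:ℝ) ≤ ((g+2:ℕ):ℝ) - 1) (by linarith : (0:ℝ) ≤ ((g+2:ℕ):ℝ) - 2))]

lemma neg_bound (β γ : ℝ) (hγ : 0 ≤ γ) (hβγ : β ≤ γ) (g : ℕ) :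
    β*g - γ*(g:ℝ)^2 ≤ 0 := by
  match g with
  | 0 => simp
  | (g+1) =>
    have hg : (1:ℝ) ≤ ((g+1:ℕ):ℝ) := by exact_mod_cast Nat.le_add_left 1 g
    nlinarith [mul_nonneg hγ (by linarith : (0:ℝ) ≤ ((g+1:ℕ):ℝ) - 1)]

lemma log_ge_one {x : ℝ} (hx : 3 ≤ x) : 1 ≤ Real.log x := by
  have h1 : Real.exp 1 ≤ 3 := le_of_lt (lt_trans Real.exp_one_lt_d9 (by norm_num))
  calc (1:ℝ) = Real.log (Real.exp 1) := (Real.log_exp 1).symm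
    _ ≤ Real.log x := Real.log_le_log (Real.exp_pos 1) (le_trans h1 hx)

/-- antitonicity of log x / x for x ≥ 3, in product form -/
lemma log_div_self_anti {x y : ℝ} (hx : 3 ≤ x) (hxy : x ≤ y) :
    x * Real.log y ≤ y * Real.log x := by
  have hx0 : (0:ℝ) < x := by linarith
  have hy0 : (0:ℝ) < y := by linarith
  have h1 : Real.log y = Real.log x + Real.log (y/x) := by
    rw [Real.log_div (by positivity) (by positivity)]; ring
  have h2 : Real.log (y/x) ≤ y/x - 1 := Real.log_le_sub_one_of_pos (by positivity)
  have h3 : 1 ≤ Real.log x := log_ge_one hx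
  have h4 : x * Real.log (y/x) ≤ y - x := by
    have := mul_le_mul_of_nonneg_left h2 (le_of_lt hx0)
    calc x * Real.log (y/x) ≤ x * (y/x - 1) := this
      _ = y - x := by field_simp
  nlinarith [h4, h3, sub_nonneg.mpr hxy]

lemma one_add_inv_pow_le {s : ℕ} (hs : 1 ≤ s) : (1 + 1/(s:ℝ))^s ≤ 3 := by
  have hs0 : (0:ℝ) < s := by exact_mod_cast hs
  have h1 : 1 + 1/(s:ℝ) ≤ Real.exp (1/(s:ℝ)) := by
    have := Real.add_one_le_exp (1/(s:ℝ)); linarith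
  calc (1 + 1/(s:ℝ))^s ≤ (Real.exp (1/(s:ℝ)))^s :=
        pow_le_pow_left₀ (by positivity) h1 s
    _ = Real.exp ((s:ℝ) * (1/(s:ℝ))) := (Real.exp_nat_mul _ s).symm
    _ = Real.exp 1 := by rw [mul_one_div, div_self (ne_of_gt hs0)]
    _ ≤ 3 := le_of_lt (lt_trans Real.exp_one_lt_d9 (by norm_num))

lemma fact_pow_ineq : ∀ s : ℕ, 8 ≤ s → (2*s)^(2*s-1) ≤ (Nat.factorial s)^4 := by
  intro s hs
  induction s, hs using Nat.le_induction with
  | base => norm_num [Nat.factorial]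
  | succ s hs ih =>
    have key : (2*(s+1))^(2*(s+1)-1) ≤ (s+1)^4 * (2*s)^(2*s-1) := by
      -- real proof
      have h8 : (8:ℝ) ≤ (s:ℝ) := by exact_mod_cast hs
      have hs0 : (0:ℝ) < (s:ℝ) := by linarith
      have hmono : (1 + 1/(s:ℝ))^(2*s-3) ≤ (1 + 1/(s:ℝ))^(2*s) := by
        apply pow_le_pow_right₀ (le_add_of_nonneg_right (by positivity)) (by omega)
      have h9 : (1 + 1/(s:ℝ))^(2*s) ≤ 9 := by
        have := one_add_inv_pow_le (s := s) (by omega)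
        calc (1 + 1/(s:ℝ))^(2*s) = ((1 + 1/(s:ℝ))^s)^2 := by rw [← pow_mul, Nat.mul_comm]
          _ ≤ 3^2 := by
              apply pow_le_pow_left₀ (by positivity) this
          _ = 9 := by norm_num
      have hsp : ((s:ℝ)+1) = s * (1 + 1/(s:ℝ)) := by field_simp
      have hcore : 4 * ((s:ℝ)+1)^(2*s-3) ≤ (s:ℝ)^(2*s-1) := by
        have e1 : (s:ℝ)^(2*s-1) = (s:ℝ)^(2*s-3) * (s:ℝ)^2 := by
          rw [← pow_add]; congr 1; omega
        have : ((s:ℝ)+1)^(2*s-3) = (s:ℝ)^(2*s-3) * (1 + 1/(s:ℝ))^(2*s-3) := by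
          rw [hsp, mul_pow]
        rw [this, e1]
        have h36 : 4 * (1 + 1/(s:ℝ))^(2*s-3) ≤ 36 := by nlinarith
        have hsep : (36:ℝ) ≤ (s:ℝ)^2 := by nlinarith
        have hpow : (0:ℝ) ≤ (s:ℝ)^(2*s-3) := by positivity
        nlinarith [mul_le_mul_of_nonneg_left h36 hpow, mul_le_mul_of_nonneg_left hsep hpow]
      -- now cast
      have hr : ((2*(s+1):ℕ):ℝ)^(2*(s+1)-1) ≤ ((s+1:ℕ):ℝ)^4 * ((2*s:ℕ):ℝ)^(2*s-1) := by
        have e2 : 2*(s+1)-1 = (2*s-3)+4 := by omega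
        have e3 : 2*s-1 = (2*s-3)+2 := by omega
        push_cast
        rw [e2, e3]
        have lhs_eq : (2*((s:ℝ)+1))^((2*s-3)+4) = 2^((2*s-3)+4) * ((s:ℝ)+1)^((2*s-3)+4) := by
          rw [mul_pow]
        have rhs_eq : ((s:ℝ)+1)^4 * (2*(s:ℝ))^((2*s-3)+2)
            = ((s:ℝ)+1)^4 * (2^((2*s-3)+2) * (s:ℝ)^((2*s-3)+2)) := by rw [mul_pow]
        rw [lhs_eq, rhs_eq]
        have e4 : (2:ℝ)^((2*s-3)+4) = 4 * 2^((2*s-3)+2) := by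
          rw [pow_add, pow_add]; ring
        rw [e4]
        have expand : ((s:ℝ)+1)^((2*s-3)+4) = ((s:ℝ)+1)^(2*s-3) * ((s:ℝ)+1)^4 := by
          rw [pow_add]
        have expand2 : (s:ℝ)^((2*s-3)+2) = (s:ℝ)^(2*s-1) := by congr 1; omega
        rw [expand, expand2]
        have h2p : (0:ℝ) < 2^((2*s-3)+2) := by positivity
        have h4p : (0:ℝ) ≤ ((s:ℝ)+1)^4 := by positivity
        calc 4 * 2^((2*s-3)+2) * (((s:ℝ)+1)^(2*s-3) * ((s:ℝ)+1)^4)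
            = 2^((2*s-3)+2) * (((s:ℝ)+1)^4 * (4 * ((s:ℝ)+1)^(2*s-3))) := by ring
          _ ≤ 2^((2*s-3)+2) * (((s:ℝ)+1)^4 * (s:ℝ)^(2*s-1)) := by
              apply mul_le_mul_of_nonneg_left _ (le_of_lt h2p)
              exact mul_le_mul_of_nonneg_left hcore h4p
          _ = ((s:ℝ)+1)^4 * (2^((2*s-3)+2) * (s:ℝ)^(2*s-1)) := by ring
      exact_mod_cast hr
    calc (2*(s+1))^(2*(s+1)-1) ≤ (s+1)^4 * (2*s)^(2*s-1) := key
      _ ≤ (s+1)^4 * (Nat.factorial s)^4 := Nat.mul_le_mul_left _ ih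
      _ = (Nat.factorial (s+1))^4 := by rw [Nat.factorial_succ, mul_pow]

noncomputable def Phi (n s : ℕ) : ℝ :=
  ∑ r ∈ range s, (Real.log ((n-s+1+r : ℕ)) - Real.log ((r+1 : ℕ)))

lemma Phi_le (n s : ℕ) (h : s ≤ n) :
    Phi n s ≤ s * Real.log n - Real.log (Nat.factorial s) := by
  unfold Phi
  rw [sum_sub_distrib]
  have h2 : ∑ r ∈ range s, Real.log ((r+1:ℕ)) = Real.log (Nat.factorial s) := by
    rw [← Real.log_prod]
    · congr 1
      rw [← Nat.cast_prod]
      congr 1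
      exact Finset.prod_range_add_one_eq_factorial s
    · intro x hx
      have : (0:ℝ) < ((x+1:ℕ):ℝ) := by positivity
      exact ne_of_gt this
  have h1 : ∑ r ∈ range s, Real.log ((n-s+1+r : ℕ)) ≤ s * Real.log n := by
    calc ∑ r ∈ range s, Real.log ((n-s+1+r : ℕ)) ≤ ∑ r ∈ range s, Real.log n := by
          apply sum_le_sum
          intro r hr
          apply Real.log_le_log
          · have : 1 ≤ n-s+1+r := by omega
            exact_mod_cast this
          · have hr' : r < s := mem_range.mp hr
            have : n-s+1+r ≤ n := by omega
            exact_mod_cast this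
      _ = s * Real.log n := by rw [sum_const, card_range, nsmul_eq_mul]
  linarith

lemma prod_asc (m s : ℕ) : ∏ r ∈ range s, (m+1+r) = (m+1).ascFactorial s := by
  induction s with
  | zero => simp
  | succ s ih => rw [prod_range_succ, ih, Nat.ascFactorial_succ]; ring

lemma Phi_eq_choose (n s : ℕ) (h : s ≤ n) :
    Phi n s = Real.log (n.choose s) := by
  unfold Phi
  rw [sum_sub_distrib]
  have h1 : ∑ r ∈ range s, Real.log ((n-s+1+r : ℕ)) = Real.log ((n-s+1).ascFactorial s) := by
    rw [← Real.log_prod]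
    · congr 1
      rw [← Nat.cast_prod]
      congr 1
      exact prod_asc (n-s) s
    · intro x hx
      have : (0:ℝ) < ((n-s+1+x:ℕ):ℝ) := by positivity
      exact ne_of_gt this
  have h2 : ∑ r ∈ range s, Real.log ((r+1:ℕ)) = Real.log (Nat.factorial s) := by
    rw [← Real.log_prod]
    · congr 1
      rw [← Nat.cast_prod]
      congr 1
      exact Finset.prod_range_add_one_eq_factorial s
    · intro x hx
      have : (0:ℝ) < ((x+1:ℕ):ℝ) := by positivity
      exact ne_of_gt this
  rw [h1, h2]
  have h3 : (n-s+1).ascFactorial s = Nat.factorial s * n.choose s := by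
    have := Nat.ascFactorial_eq_factorial_mul_choose (n-s) s
    rw [this]
    congr 2
    omega
  rw [h3]
  have hcp : (0:ℝ) < (n.choose s : ℝ) := by exact_mod_cast Nat.choose_pos h
  have hfp : (0:ℝ) < (Nat.factorial s : ℝ) := by exact_mod_cast Nat.factorial_pos s
  push_cast
  rw [Real.log_mul (ne_of_gt hfp) (ne_of_gt hcp)]
  ring

lemma M_nat (n s : ℕ) (hs : s ≤ n) (hn1 : 2 ≤ n)
    (hpow : (n.choose s)^(n^2) ≤ n^(s*(n-s)*(n+1))) :
    Phi n s ≤ Real.log n * ((s:ℝ)*((n:ℝ)-s)*((n:ℝ)+1)) / (n:ℝ)^2 := by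
  rw [Phi_eq_choose n s hs]
  have hcp : (0:ℝ) < (n.choose s : ℝ) := by exact_mod_cast Nat.choose_pos hs
  have hlog : ((n^2:ℕ):ℝ) * Real.log (n.choose s) ≤ ((s*(n-s)*(n+1):ℕ):ℝ) * Real.log n := by
    have h1 : Real.log (((n.choose s : ℕ):ℝ)^(n^2)) ≤ Real.log (((n:ℕ):ℝ)^(s*(n-s)*(n+1))) := by
      apply Real.log_le_log (by positivity)
      exact_mod_cast hpow
    rw [Real.log_pow, Real.log_pow] at h1
    exact_mod_cast h1
  have hn0 : (0:ℝ) < (n:ℝ)^2 := by positivity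
  have hcast : ((s*(n-s)*(n+1):ℕ):ℝ) = (s:ℝ)*((n:ℝ)-s)*((n:ℝ)+1) := by
    push_cast [Nat.cast_sub hs]; ring
  rw [le_div_iff₀ hn0]
  rw [hcast] at hlog
  push_cast at hlog
  linarith [hlog]

lemma hcore_of_T (s T n : ℕ) (hT3 : 3 ≤ T) (hTn : T ≤ n)
    (hfact : T^(s*(2*s-1)) ≤ (Nat.factorial s)^(2*T)) :
    (s:ℝ)*(2*(s:ℝ)-1) * Real.log n ≤ 2*(n:ℝ)*Real.log (Nat.factorial s) := by
  have hT0 : (0:ℝ) < (T:ℝ) := by exact_mod_cast Nat.lt_of_lt_of_le (by norm_num) hT3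
  have hn0 : (0:ℝ) < (n:ℝ) := by exact_mod_cast Nat.lt_of_lt_of_le (by norm_num) (le_trans hT3 hTn)
  have h1 : (T:ℝ) * Real.log n ≤ (n:ℝ) * Real.log T :=
    log_div_self_anti (by exact_mod_cast hT3) (by exact_mod_cast hTn)
  have h2 : ((s*(2*s-1):ℕ):ℝ) * Real.log T ≤ ((2*T:ℕ):ℝ) * Real.log (Nat.factorial s) := by
    have hl : Real.log ((T:ℝ)^(s*(2*s-1))) ≤ Real.log (((Nat.factorial s:ℕ):ℝ)^(2*T)) := by
      apply Real.log_le_log (by positivity)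
      exact_mod_cast hfact
    rw [Real.log_pow, Real.log_pow] at hl
    exact_mod_cast hl
  have hc : ((s*(2*s-1):ℕ):ℝ) = (s:ℝ)*(2*(s:ℝ)-1) := by
    rcases s with _|s
    · simp
    · push_cast [Nat.cast_sub (by omega : 1 ≤ 2*(s+1))]; ring
  rw [hc] at h2
  push_cast at h2
  set c := (s:ℝ)*(2*(s:ℝ)-1) with hcdef
  have hc0 : 0 ≤ c := by
    rcases Nat.eq_zero_or_pos s with h|h
    · simp [hcdef, h]
    · have : (1:ℝ) ≤ (s:ℝ) := by exact_mod_cast h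
      apply mul_nonneg (by linarith)
      nlinarith
  -- c*T*L ≤ c*n*logT ≤ 2*T*n*F
  have hA : c * ((T:ℝ) * Real.log n) ≤ c * ((n:ℝ) * Real.log T) :=
    mul_le_mul_of_nonneg_left h1 hc0
  have hB : (n:ℝ) * (c * Real.log T) ≤ (n:ℝ) * (2*(T:ℝ)*Real.log (Nat.factorial s)) :=
    mul_le_mul_of_nonneg_left h2 (le_of_lt hn0)
  have hfinal : (T:ℝ) * (c * Real.log n) ≤ (T:ℝ) * (2*(n:ℝ)*Real.log (Nat.factorial s)) := by
    nlinarith [hA, hB]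
  have := le_of_mul_le_mul_left hfinal hT0
  linarith

lemma M_analytic (n s : ℕ) (hs2 : 2 ≤ s) (h2s : 2*s ≤ n)
    (hcore : (s:ℝ)*(2*(s:ℝ)-1) * Real.log n ≤ 2*(n:ℝ)*Real.log (Nat.factorial s)) :
    Phi n s ≤ Real.log n * ((s:ℝ)*((n:ℝ)-s)*((n:ℝ)+1)) / (n:ℝ)^2 := by
  have hsn : s ≤ n := by omega
  have hn0 : (0:ℝ) < (n:ℝ) := by
    have : 0 < n := by omega
    exact_mod_cast this
  have hL0 : 0 ≤ Real.log n := Real.log_nonneg (by exact_mod_cast (by omega : 1 ≤ n))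
  have h1 := Phi_le n s hsn
  set L := Real.log n with hLdef
  set F := Real.log (Nat.factorial s) with hFdef
  -- F ≥ s(2s-1)L/(2n)
  have hF : (s:ℝ)*(2*(s:ℝ)-1)*L/(2*(n:ℝ)) ≤ F := by
    rw [div_le_iff₀ (by positivity)]
    nlinarith [hcore]
  -- bracket inequality
  have hs' : (2:ℝ)*(s:ℝ) ≤ (n:ℝ) := by exact_mod_cast h2s
  have hkey : (s:ℝ)*L - (s:ℝ)*(2*(s:ℝ)-1)*L/(2*(n:ℝ)) ≤ L * ((s:ℝ)*((n:ℝ)-s)*((n:ℝ)+1)) / (n:ℝ)^2 := by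
    have hmul : (s:ℝ)*L - (s:ℝ)*(2*(s:ℝ)-1)*L/(2*(n:ℝ)) - L*((s:ℝ)*((n:ℝ)-s)*((n:ℝ)+1))/(n:ℝ)^2
        = (L*(s:ℝ)*(2*(s:ℝ)-(n:ℝ))) / (2*(n:ℝ)^2) := by
      field_simp
      ring
    have hnum : L*(s:ℝ)*(2*(s:ℝ)-(n:ℝ)) ≤ 0 := by
      apply mul_nonpos_of_nonneg_of_nonpos
      · positivity
      · linarith
    have hq : (L*(s:ℝ)*(2*(s:ℝ)-(n:ℝ))) / (2*(n:ℝ)^2) ≤ 0 :=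
      div_nonpos_of_nonpos_of_nonneg hnum (by positivity)
    linarith
  linarith


lemma M_main (n s : ℕ) (hs2 : 2 ≤ s) (h2s : 2*s ≤ n) (h5 : 5 ≤ n) :
    Phi n s ≤ Real.log n * ((s:ℝ)*((n:ℝ)-s)*((n:ℝ)+1)) / (n:ℝ)^2 := by
  by_cases hbig : 8 ≤ s
  · apply M_analytic n s hs2 h2s
    apply hcore_of_T s (2*s) n (by omega) h2s
    have h1 : (2*s)^(2*s-1) ≤ (Nat.factorial s)^4 := fact_pow_ineq s hbig
    calc (2*s)^(s*(2*s-1)) = ((2*s)^(2*s-1))^s := by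
          rw [← pow_mul]
          congr 1
          ring
      _ ≤ ((Nat.factorial s)^4)^s := Nat.pow_le_pow_left h1 s
      _ = (Nat.factorial s)^(2*(2*s)) := by rw [← pow_mul]; ring_nf
  · have hs7 : s ≤ 7 := by omega
    interval_cases s
    · -- s = 2
      by_cases hT : 10 ≤ n
      · apply M_analytic n 2 (by norm_num) h2s
        apply hcore_of_T 2 10 n (by norm_num) hT
        norm_num [Nat.factorial]
      · interval_cases n
        · exact M_nat 5 2 (by norm_num) (by norm_num) (by norm_num [show Nat.choose 5 2 = 10 from rfl])
        · exact M_nat 6 2 (by norm_num) (by norm_num) (by norm_num [show Nat.choose 6 2 = 15 from rfl])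
        · exact M_nat 7 2 (by norm_num) (by norm_num) (by norm_num [show Nat.choose 7 2 = 21 from rfl])
        · exact M_nat 8 2 (by norm_num) (by norm_num) (by norm_num [show Nat.choose 8 2 = 28 from rfl])
        · exact M_nat 9 2 (by norm_num) (by norm_num) (by norm_num [show Nat.choose 9 2 = 36 from rfl])
    · -- s = 3
      by_cases hT : 10 ≤ n
      · apply M_analytic n 3 (by norm_num) h2s
        apply hcore_of_T 3 10 n (by norm_num) hT
        norm_num [Nat.factorial]
      · interval_cases n
        · exact M_nat 6 3 (by norm_num) (by norm_num) (by norm_num [show Nat.choose 6 3 = 20 from rfl])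
        · exact M_nat 7 3 (by norm_num) (by norm_num) (by norm_num [show Nat.choose 7 3 = 35 from rfl])
        · exact M_nat 8 3 (by norm_num) (by norm_num) (by norm_num [show Nat.choose 8 3 = 56 from rfl])
        · exact M_nat 9 3 (by norm_num) (by norm_num) (by norm_num [show Nat.choose 9 3 = 84 from rfl])
    · -- s = 4
      by_cases hT : 11 ≤ n
      · apply M_analytic n 4 (by norm_num) h2s
        apply hcore_of_T 4 11 n (by norm_num) hT
        norm_num [Nat.factorial]
      · interval_cases n
        · exact M_nat 8 4 (by norm_num) (by norm_num) (by norm_num [show Nat.choose 8 4 = 70 from rfl])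
        · exact M_nat 9 4 (by norm_num) (by norm_num) (by norm_num [show Nat.choose 9 4 = 126 from rfl])
        · exact M_nat 10 4 (by norm_num) (by norm_num) (by norm_num [show Nat.choose 10 4 = 210 from rfl]; decide)
    · -- s = 5
      by_cases hT : 12 ≤ n
      · apply M_analytic n 5 (by norm_num) h2s
        apply hcore_of_T 5 12 n (by norm_num) hT
        norm_num [Nat.factorial]
      · interval_cases n
        · exact M_nat 10 5 (by norm_num) (by norm_num) (by norm_num [show Nat.choose 10 5 = 252 from rfl]; decide)
        · exact M_nat 11 5 (by norm_num) (by norm_num) (by norm_num [show Nat.choose 11 5 = 462 from rfl]; decide)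
    · -- s = 6
      by_cases hT : 13 ≤ n
      · apply M_analytic n 6 (by norm_num) h2s
        apply hcore_of_T 6 13 n (by norm_num) hT
        norm_num [Nat.factorial]
      · interval_cases n
        · exact M_nat 12 6 (by norm_num) (by norm_num) (by norm_num [show Nat.choose 12 6 = 924 from rfl]; decide)
    · -- s = 7
      by_cases hT : 15 ≤ n
      · apply M_analytic n 7 (by norm_num) h2s
        apply hcore_of_T 7 15 n (by norm_num) hT
        norm_num [Nat.factorial]
      · interval_cases n
        · exact M_nat 14 7 (by norm_num) (by norm_num) (by norm_num [show Nat.choose 14 7 = 3432 from rfl]; decide +kernel)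

lemma Ico_as_filter {a j n : ℕ} (hj : j ≤ n) :
    Finset.Ico a j = (Finset.range n).filter (fun t => a ≤ t ∧ t < j) := by
  ext x
  simp only [Finset.mem_Ico, Finset.mem_filter, Finset.mem_range]
  omega

lemma Ico_as_filter' {a n : ℕ} :
    Finset.Ico a n = (Finset.range n).filter (fun t => a ≤ t) := by
  ext x
  simp only [Finset.mem_Ico, Finset.mem_filter, Finset.mem_range]
  omega

lemma range_as_filter {t n : ℕ} (ht : t < n) :
    Finset.range (t+1) = (Finset.range n).filter (fun i => i ≤ t) := by
  ext x
  simp only [Finset.mem_filter, Finset.mem_range]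
  omega

lemma triple_swap (n : ℕ) (v : ℕ → ℝ) (c : ℕ → ℕ → ℝ) :
    ∑ i ∈ Finset.range n, ∑ j ∈ Finset.Ico (i+1) n, (∑ t ∈ Finset.Ico i j, v t) * c i j
    = ∑ t ∈ Finset.range n, v t * ∑ i ∈ Finset.range (t+1), ∑ j ∈ Finset.Ico (t+1) n, c i j := by
  have lhs_eq : ∑ i ∈ Finset.range n, ∑ j ∈ Finset.Ico (i+1) n, (∑ t ∈ Finset.Ico i j, v t) * c i j
      = ∑ i ∈ Finset.range n, ∑ j ∈ Finset.range n, ∑ t ∈ Finset.range n,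
          (if i ≤ t ∧ t < j then v t * c i j else 0) := by
    apply Finset.sum_congr rfl
    intro i _
    rw [Ico_as_filter' (a := i+1) (n := n), Finset.sum_filter]
    apply Finset.sum_congr rfl
    intro j hj
    have hjn : j ≤ n := le_of_lt (Finset.mem_range.mp hj)
    by_cases hij : i + 1 ≤ j
    · rw [if_pos hij, Finset.sum_mul, Ico_as_filter (a := i) hjn, Finset.sum_filter]
    · rw [if_neg hij]
      symm
      apply Finset.sum_eq_zero
      intro t _
      rw [if_neg]
      omega
  have rhs_eq : ∑ t ∈ Finset.range n, v t * ∑ i ∈ Finset.range (t+1), ∑ j ∈ Finset.Ico (t+1) n, c i j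
      = ∑ t ∈ Finset.range n, ∑ i ∈ Finset.range n, ∑ j ∈ Finset.range n,
          (if i ≤ t ∧ t < j then v t * c i j else 0) := by
    apply Finset.sum_congr rfl
    intro t ht
    have htn : t < n := Finset.mem_range.mp ht
    rw [range_as_filter htn, Finset.sum_filter, Finset.mul_sum]
    apply Finset.sum_congr rfl
    intro i _
    rw [Ico_as_filter' (a := t+1) (n := n), Finset.sum_filter]
    by_cases hit : i ≤ t
    · rw [if_pos hit, Finset.mul_sum]
      apply Finset.sum_congr rfl
      intro j _
      by_cases htj : t + 1 ≤ j
      · rw [if_pos htj, if_pos ⟨hit, by omega⟩]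
      · rw [if_neg htj, if_neg (by omega), mul_zero]
    · rw [if_neg hit, mul_zero]
      symm
      apply Finset.sum_eq_zero
      intro j _
      rw [if_neg (by omega)]
  rw [lhs_eq, rhs_eq]
  have step1 : ∑ i ∈ Finset.range n, ∑ j ∈ Finset.range n, ∑ t ∈ Finset.range n,
          (if i ≤ t ∧ t < j then v t * c i j else 0)
      = ∑ i ∈ Finset.range n, ∑ t ∈ Finset.range n, ∑ j ∈ Finset.range n,
          (if i ≤ t ∧ t < j then v t * c i j else 0) := by
    apply Finset.sum_congr rfl
    intro i _
    exact Finset.sum_comm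
  rw [step1]
  exact Finset.sum_comm

lemma pair_linear (n : ℕ) (a : ℕ → ℝ) :
    ∑ i ∈ Finset.range n, ∑ j ∈ Finset.Ico (i+1) n, (a i - a j)
    = ∑ i ∈ Finset.range n, ((n:ℝ) - 1 - 2*i) * a i := by
  have h1 : ∑ i ∈ Finset.range n, ∑ j ∈ Finset.Ico (i+1) n, a i
      = ∑ i ∈ Finset.range n, ((n:ℝ) - 1 - i) * a i := by
    apply Finset.sum_congr rfl
    intro i hi
    have hin : i < n := Finset.mem_range.mp hi
    rw [Finset.sum_const, Nat.card_Ico, nsmul_eq_mul]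
    have : ((n - (i+1) : ℕ) : ℝ) = (n:ℝ) - 1 - i := by
      push_cast [Nat.cast_sub (by omega : i+1 ≤ n)]
      ring
    rw [this]
  have h2 : ∑ i ∈ Finset.range n, ∑ j ∈ Finset.Ico (i+1) n, a j
      = ∑ j ∈ Finset.range n, (j:ℝ) * a j := by
    have e1 : ∑ i ∈ Finset.range n, ∑ j ∈ Finset.Ico (i+1) n, a j
        = ∑ i ∈ Finset.range n, ∑ j ∈ Finset.range n, (if i+1 ≤ j then a j else 0) := by
      apply Finset.sum_congr rfl
      intro i _
      rw [Ico_as_filter' (a := i+1) (n := n), Finset.sum_filter]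
    rw [e1, Finset.sum_comm]
    apply Finset.sum_congr rfl
    intro j hj
    have hjn : j < n := Finset.mem_range.mp hj
    have e2 : ∑ i ∈ Finset.range n, (if i+1 ≤ j then a j else 0)
        = ∑ i ∈ (Finset.range n).filter (fun i => i+1 ≤ j), a j := by
      rw [Finset.sum_filter]
    rw [e2]
    have e3 : (Finset.range n).filter (fun i => i+1 ≤ j) = Finset.range j := by
      ext x
      simp only [Finset.mem_filter, Finset.mem_range]
      omega
    rw [e3, Finset.sum_const, Finset.card_range, nsmul_eq_mul]
  have h0 : ∑ i ∈ Finset.range n, ∑ j ∈ Finset.Ico (i+1) n, (a i - a j)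
      = ∑ i ∈ Finset.range n, ∑ j ∈ Finset.Ico (i+1) n, a i
        - ∑ i ∈ Finset.range n, ∑ j ∈ Finset.Ico (i+1) n, a j := by
    rw [← Finset.sum_sub_distrib]
    apply Finset.sum_congr rfl
    intro i _
    rw [← Finset.sum_sub_distrib]
  rw [h0, h1, h2, ← Finset.sum_sub_distrib]
  apply Finset.sum_congr rfl
  intro i _
  ring

lemma pair_square (n : ℕ) (a : ℕ → ℝ) :
    2 * ∑ i ∈ Finset.range n, ∑ j ∈ Finset.Ico (i+1) n, (a i - a j)^2
    = 2 * ((n:ℝ) * ∑ i ∈ Finset.range n, (a i)^2 - (∑ i ∈ Finset.range n, a i)^2) := by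
  have full : ∑ i ∈ Finset.range n, ∑ j ∈ Finset.range n, (a i - a j)^2
      = 2 * ((n:ℝ) * ∑ i ∈ Finset.range n, (a i)^2 - (∑ i ∈ Finset.range n, a i)^2) := by
    have expand : ∀ i j, (a i - a j)^2 = (a i)^2 + (a j)^2 - 2 * (a i * a j) := by
      intro i j; ring
    calc ∑ i ∈ Finset.range n, ∑ j ∈ Finset.range n, (a i - a j)^2
        = ∑ i ∈ Finset.range n, ∑ j ∈ Finset.range n, ((a i)^2 + (a j)^2 - 2 * (a i * a j)) := by
          apply Finset.sum_congr rfl; intro i _; apply Finset.sum_congr rfl; intro j _; rw [expand]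
      _ = ∑ i ∈ Finset.range n, ((n:ℝ) * (a i)^2 + (∑ j ∈ Finset.range n, (a j)^2)
            - 2 * (a i * ∑ j ∈ Finset.range n, a j)) := by
          apply Finset.sum_congr rfl
          intro i _
          rw [Finset.sum_sub_distrib, Finset.sum_add_distrib, Finset.sum_const, Finset.card_range,
            nsmul_eq_mul, ← Finset.mul_sum, ← Finset.mul_sum]
      _ = (n:ℝ) * (∑ i ∈ Finset.range n, (a i)^2) + (n:ℝ) * (∑ j ∈ Finset.range n, (a j)^2)
            - 2 * ((∑ i ∈ Finset.range n, a i) * (∑ j ∈ Finset.range n, a j)) := by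
          rw [Finset.sum_sub_distrib, Finset.sum_add_distrib, ← Finset.mul_sum, Finset.sum_const,
            Finset.card_range, nsmul_eq_mul, ← Finset.mul_sum, ← Finset.sum_mul]
      _ = 2 * ((n:ℝ) * ∑ i ∈ Finset.range n, (a i)^2 - (∑ i ∈ Finset.range n, a i)^2) := by
          ring
  have split : ∑ i ∈ Finset.range n, ∑ j ∈ Finset.range n, (a i - a j)^2
      = 2 * ∑ i ∈ Finset.range n, ∑ j ∈ Finset.Ico (i+1) n, (a i - a j)^2 := by
    have tri : ∀ i j : ℕ, (a i - a j)^2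
        = (if i+1 ≤ j then (a i - a j)^2 else 0) + (if j+1 ≤ i then (a i - a j)^2 else 0)
          + (if i = j then (a i - a j)^2 else 0) := by
      intro i j
      rcases lt_trichotomy i j with h|h|h
      · rw [if_pos (by omega), if_neg (by omega), if_neg (by omega)]; ring
      · rw [if_neg (by omega), if_neg (by omega), if_pos h]; ring
      · rw [if_neg (by omega), if_pos (by omega), if_neg (by omega)]; ring
    have e0 : ∑ i ∈ Finset.range n, ∑ j ∈ Finset.range n, (a i - a j)^2
        = ∑ i ∈ Finset.range n, ∑ j ∈ Finset.range n, (if i+1 ≤ j then (a i - a j)^2 else 0)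
          + ∑ i ∈ Finset.range n, ∑ j ∈ Finset.range n, (if j+1 ≤ i then (a i - a j)^2 else 0)
          + ∑ i ∈ Finset.range n, ∑ j ∈ Finset.range n, (if i = j then (a i - a j)^2 else 0) := by
      rw [← Finset.sum_add_distrib, ← Finset.sum_add_distrib]
      apply Finset.sum_congr rfl
      intro i _
      rw [← Finset.sum_add_distrib, ← Finset.sum_add_distrib]
      apply Finset.sum_congr rfl
      intro j _
      exact tri i j
    have ediag : ∑ i ∈ Finset.range n, ∑ j ∈ Finset.range n, (if i = j then (a i - a j)^2 else 0) = 0 := by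
      apply Finset.sum_eq_zero
      intro i _
      apply Finset.sum_eq_zero
      intro j _
      by_cases h : i = j
      · rw [if_pos h, h]; ring
      · rw [if_neg h]
    have esym : ∑ i ∈ Finset.range n, ∑ j ∈ Finset.range n, (if j+1 ≤ i then (a i - a j)^2 else 0)
        = ∑ i ∈ Finset.range n, ∑ j ∈ Finset.range n, (if i+1 ≤ j then (a i - a j)^2 else 0) := by
      rw [Finset.sum_comm]
      apply Finset.sum_congr rfl
      intro i _
      apply Finset.sum_congr rfl
      intro j _
      congr 1
      ring
    have eIco : ∑ i ∈ Finset.range n, ∑ j ∈ Finset.range n, (if i+1 ≤ j then (a i - a j)^2 else 0)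
        = ∑ i ∈ Finset.range n, ∑ j ∈ Finset.Ico (i+1) n, (a i - a j)^2 := by
      apply Finset.sum_congr rfl
      intro i _
      rw [Ico_as_filter' (a := i+1) (n := n), Finset.sum_filter]
    rw [e0, ediag, esym, eIco]
    ring
  rw [← split, full]

noncomputable def cw (i j : ℕ) : ℝ := Real.log ((j+1-i : ℕ)) - Real.log ((j-i : ℕ))

noncomputable def Aw (n t : ℕ) : ℝ := ∑ i ∈ Finset.range (t+1), ∑ j ∈ Finset.Ico (t+1) n, cw i j

lemma Aw_eq_Phi1 (n t : ℕ) (ht : t + 1 ≤ n) : Aw n t = Phi n (t+1) := by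
  unfold Aw
  have inner : ∀ i, i ≤ t → ∑ j ∈ Finset.Ico (t+1) n, cw i j
      = Real.log ((n-i : ℕ)) - Real.log ((t+1-i : ℕ)) := by
    intro i hi
    rw [Finset.sum_Ico_eq_sum_range]
    have e1 : ∀ r, cw i (t+1+r) = Real.log ((t+1-i+(r+1) : ℕ)) - Real.log ((t+1-i+r : ℕ)) := by
      intro r
      unfold cw
      have e2 : t+1+r+1-i = t+1-i+(r+1) := by omega
      have e3 : t+1+r-i = t+1-i+r := by omega
      rw [e2, e3]
    calc ∑ r ∈ Finset.range (n-(t+1)), cw i (t+1+r)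
        = ∑ r ∈ Finset.range (n-(t+1)),
            (Real.log ((t+1-i+(r+1) : ℕ)) - Real.log ((t+1-i+r : ℕ))) := by
          apply Finset.sum_congr rfl
          intro r _
          exact e1 r
      _ = Real.log ((t+1-i+(n-(t+1)) : ℕ)) - Real.log ((t+1-i+0 : ℕ)) := by
          exact Finset.sum_range_sub (fun r => Real.log ((t+1-i+r : ℕ))) (n-(t+1))
      _ = Real.log ((n-i : ℕ)) - Real.log ((t+1-i : ℕ)) := by
          have e4 : t+1-i+(n-(t+1)) = n-i := by omega
          have e5 : t+1-i+0 = t+1-i := by omega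
          rw [e4, e5]
  have step : ∑ i ∈ Finset.range (t+1), ∑ j ∈ Finset.Ico (t+1) n, cw i j
      = ∑ i ∈ Finset.range (t+1), (Real.log ((n-i : ℕ)) - Real.log ((t+1-i : ℕ))) := by
    apply Finset.sum_congr rfl
    intro i hi
    have hi' : i < t+1 := Finset.mem_range.mp hi
    exact inner i (by omega)
  have refl := Finset.sum_range_reflect
    (fun i => Real.log ((n-i : ℕ)) - Real.log ((t+1-i : ℕ))) (t+1)
  rw [step, ← refl]
  unfold Phi
  apply Finset.sum_congr rfl
  intro r hr
  have hr' : r < t + 1 := Finset.mem_range.mp hr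
  have e6 : n - (t+1-1-r) = n-(t+1)+1+r := by omega
  have e7 : t+1-(t+1-1-r) = r+1 := by omega
  show Real.log ((n-(t+1-1-r) : ℕ)) - Real.log ((t+1-(t+1-1-r) : ℕ))
      = Real.log ((n-(t+1)+1+r : ℕ)) - Real.log ((r+1 : ℕ))
  rw [e6, e7]

lemma Aw_eq_Phi2 (n t : ℕ) (ht : t + 1 ≤ n) : Aw n t = Phi n (n-1-t) := by
  unfold Aw
  rw [Finset.sum_comm]
  have inner : ∀ j, t+1 ≤ j → ∑ i ∈ Finset.range (t+1), cw i j
      = Real.log ((j+1 : ℕ)) - Real.log ((j-t : ℕ)) := by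
    intro j hj
    have e1 : ∀ i, cw i j
        = Real.log ((j+1-i : ℕ)) - Real.log ((j+1-(i+1) : ℕ)) := by
      intro i
      unfold cw
      have e2 : j+1-(i+1) = j-i := by omega
      rw [e2]
    calc ∑ i ∈ Finset.range (t+1), cw i j
        = ∑ i ∈ Finset.range (t+1),
            (Real.log ((j+1-i : ℕ)) - Real.log ((j+1-(i+1) : ℕ))) := by
          apply Finset.sum_congr rfl
          intro i _
          exact e1 i
      _ = Real.log ((j+1-0 : ℕ)) - Real.log ((j+1-(t+1) : ℕ)) := by
          exact Finset.sum_range_sub' (fun i => Real.log ((j+1-i : ℕ))) (t+1)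
      _ = Real.log ((j+1 : ℕ)) - Real.log ((j-t : ℕ)) := by
          have e3 : j+1-0 = j+1 := by omega
          have e4 : j+1-(t+1) = j-t := by omega
          rw [e3, e4]
  have step : ∑ j ∈ Finset.Ico (t+1) n, ∑ i ∈ Finset.range (t+1), cw i j
      = ∑ j ∈ Finset.Ico (t+1) n, (Real.log ((j+1 : ℕ)) - Real.log ((j-t : ℕ))) := by
    apply Finset.sum_congr rfl
    intro j hj
    exact inner j (Finset.mem_Ico.mp hj).1
  rw [step, Finset.sum_Ico_eq_sum_range]
  unfold Phi
  have hcard : n - (t+1) = n - 1 - t := by omega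
  rw [hcard]
  apply Finset.sum_congr rfl
  intro r hr
  have hr' : r < n - 1 - t := Finset.mem_range.mp hr
  have e5 : t+1+r+1 = n-(n-1-t)+1+r := by omega
  rw [e5]
  have e6 : t+1+r-t = r+1 := by omega
  rw [e6]

lemma c4_nonneg : 0 ≤ Real.log 6 - (5/2)*Real.log 2 := by
  have h1 : (2:ℝ) * Real.log 6 = Real.log ((6:ℝ)^(2:ℕ)) := by rw [Real.log_pow]; push_cast; ring
  have h2 : (5:ℝ) * Real.log 2 = Real.log ((2:ℝ)^(5:ℕ)) := by rw [Real.log_pow]; push_cast; ring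
  have h3 : Real.log ((2:ℝ)^(5:ℕ)) ≤ Real.log ((6:ℝ)^(2:ℕ)) :=
    Real.log_le_log (by norm_num) (by norm_num)
  nlinarith [h3, h1, h2]

lemma Phi_one (n : ℕ) (hn : 1 ≤ n) : Phi n 1 = Real.log n := by
  unfold Phi
  rw [Finset.sum_range_one]
  have e1 : n - 1 + 1 + 0 = n := by omega
  rw [e1]
  norm_num

lemma Aw_last (n : ℕ) : Aw n (n-1) = 0 := by
  unfold Aw
  apply Finset.sum_eq_zero
  intro i _
  have : Finset.Ico (n-1+1) n = ∅ := by
    apply Finset.Ico_eq_empty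
    omega
  rw [this]
  simp

lemma per_t (n t : ℕ) (hn : 2 ≤ n) (ht : t < n) (g : ℕ) :
    (g:ℝ) * Aw n t - Real.log n * (g:ℝ)^2 * (((t+1)*(n-(t+1)):ℕ):ℝ) / (n:ℝ)^2
      - Real.log n * (g:ℝ) * (((t+1)*(n-(t+1)):ℕ):ℝ) / (n:ℝ)
    ≤ (if t = 0 then Real.log n/(n:ℝ)^2 else 0)
      + (if t = n-2 then Real.log n/(n:ℝ)^2 else 0)
      + (if n = 4 ∧ t = 1 then Real.log 6 - (5/2)*Real.log 2 else 0) := by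
  have hn0 : (0:ℝ) < (n:ℝ) := by exact_mod_cast (by omega : 0 < n)
  have hL0 : 0 ≤ Real.log n := Real.log_nonneg (by exact_mod_cast (by omega : 1 ≤ n))
  have hrhs1 : (0:ℝ) ≤ (if t = 0 then Real.log n/(n:ℝ)^2 else 0) := by
    split
    · positivity
    · exact le_refl 0
  have hrhs2 : (0:ℝ) ≤ (if t = n-2 then Real.log n/(n:ℝ)^2 else 0) := by
    split
    · positivity
    · exact le_refl 0
  have hrhs3 : (0:ℝ) ≤ (if n = 4 ∧ t = 1 then Real.log 6 - (5/2)*Real.log 2 else 0) := by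
    split
    · exact c4_nonneg
    · exact le_refl 0
  by_cases hlast : t = n-1
  · -- empty case
    subst hlast
    rw [Aw_last n]
    have hN : n - (n-1+1) = 0 := by omega
    rw [hN]
    simp only [Nat.mul_zero, Nat.cast_zero]
    have : (g:ℝ) * 0 - Real.log n * (g:ℝ)^2 * 0 / (n:ℝ)^2 - Real.log n * (g:ℝ) * 0 / (n:ℝ) = 0 := by
      ring
    rw [this]
    linarith
  · by_cases hbd : t = 0 ∨ t = n-2
    · -- boundary case, s = 1
      have hA : Aw n t = Real.log n := by
        rcases hbd with h0 | h2
        · subst h0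
          rw [Aw_eq_Phi1 n 0 (by omega)]
          exact Phi_one n (by omega)
        · subst h2
          rw [Aw_eq_Phi2 n (n-2) (by omega)]
          have : n - 1 - (n-2) = 1 := by omega
          rw [this]
          exact Phi_one n (by omega)
      have hNval : (t+1)*(n-(t+1)) = n-1 := by
        rcases hbd with h0 | h2
        · subst h0; omega
        · subst h2
          have e : n - (n-2+1) = 1 := by omega
          rw [e]
          omega
      rw [hA, hNval]
      set L := Real.log n with hL
      have hc : ((n-1:ℕ):ℝ) = (n:ℝ) - 1 := by
        push_cast [Nat.cast_sub (by omega : 1 ≤ n)]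
        ring
      rw [hc]
      set β : ℝ := L - L * ((n:ℝ)-1) / (n:ℝ) with hβ
      set γ : ℝ := L * ((n:ℝ)-1) / (n:ℝ)^2 with hγ
      have hn1 : (1:ℝ) ≤ (n:ℝ) := by exact_mod_cast (by omega : 1 ≤ n)
      have hn2 : (2:ℝ) ≤ (n:ℝ) := by exact_mod_cast hn
      have hγ0 : 0 ≤ γ := by
        rw [hγ]
        have : (0:ℝ) ≤ (n:ℝ) - 1 := by linarith
        positivity
      have hβ3γ : β ≤ 3*γ := by
        rw [hβ, hγ]
        have e1 : L - L*((n:ℝ)-1)/(n:ℝ) = L/(n:ℝ) := by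
          field_simp
          ring
        have e2 : 3*(L*((n:ℝ)-1)/(n:ℝ)^2) = (3*L*((n:ℝ)-1))/(n:ℝ)^2 := by ring
        rw [e1, e2, div_le_div_iff₀ hn0 (by positivity)]
        nlinarith [mul_nonneg (mul_nonneg hL0 hn0.le) (by linarith : (0:ℝ) ≤ 2*(n:ℝ) - 3)]
      have hLHS : (g:ℝ) * L - L * (g:ℝ)^2 * ((n:ℝ)-1) / (n:ℝ)^2 - L * (g:ℝ) * ((n:ℝ)-1) / (n:ℝ)
          = β * g - γ * (g:ℝ)^2 := by
        rw [hβ, hγ]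
        field_simp
        ring
      rw [hLHS]
      have hbound := int_max_bound β γ hγ0 hβ3γ g
      have hβγ : β - γ = L / (n:ℝ)^2 := by
        rw [hβ, hγ]
        field_simp
        ring
      have hmax : max 0 (β - γ) ≤ (if t = 0 then L/(n:ℝ)^2 else 0)
          + (if t = n-2 then L/(n:ℝ)^2 else 0)
          + (if n = 4 ∧ t = 1 then Real.log 6 - (5/2)*Real.log 2 else 0) := by
        apply max_le
        · linarith
        · rw [hβγ]
          rcases hbd with h0 | h2
          · rw [if_pos h0]
            linarith
          · rw [if_pos h2]
            linarith
      exact hbound.trans hmax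
    · -- middle case
      push_neg at hbd
      have ht1 : 1 ≤ t := by omega
      have ht3 : t + 3 ≤ n := by omega
      set s := min (t+1) (n-1-t) with hs
      have hs2 : 2 ≤ s := by omega
      have h2s : 2*s ≤ n := by omega
      have hsn : s ≤ n := by omega
      have hcompl : n - (t+1) = n - 1 - t := by omega
      have hNs : (t+1)*(n-(t+1)) = s*(n-s) := by
        rcases Nat.le_total (t+1) (n-1-t) with hle | hge
        · have hsval : s = t+1 := by omega
          rw [hsval]
        · have hsval : s = n-1-t := by omega
          have h1 : n - s = t+1 := by omega
          rw [h1, hsval, hcompl]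
          ring
      have hA : Aw n t = Phi n s := by
        rcases Nat.le_total (t+1) (n-1-t) with hle | hge
        · have hsval : s = t+1 := by omega
          rw [hsval]
          exact Aw_eq_Phi1 n t (by omega)
        · have hsval : s = n-1-t := by omega
          rw [hsval]
          exact Aw_eq_Phi2 n t (by omega)
      rw [hA, hNs]
      set L := Real.log n with hL
      have hcastN : ((s*(n-s):ℕ):ℝ) = (s:ℝ) * ((n:ℝ) - s) := by
        push_cast [Nat.cast_sub hsn]
        ring
      rw [hcastN]
      set β : ℝ := Phi n s - L * ((s:ℝ) * ((n:ℝ)-s)) / (n:ℝ) with hβ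
      set γ : ℝ := L * ((s:ℝ) * ((n:ℝ)-s)) / (n:ℝ)^2 with hγ
      have hsr : (s:ℝ) ≤ (n:ℝ) := by exact_mod_cast hsn
      have hγ0 : 0 ≤ γ := by
        rw [hγ]
        have : (0:ℝ) ≤ (n:ℝ) - s := by linarith
        positivity
      have hLHS : (g:ℝ) * Phi n s - L * (g:ℝ)^2 * ((s:ℝ)*((n:ℝ)-s)) / (n:ℝ)^2
          - L * (g:ℝ) * ((s:ℝ)*((n:ℝ)-s)) / (n:ℝ)
          = β * g - γ * (g:ℝ)^2 := by
        rw [hβ, hγ]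
        field_simp
        ring
      rw [hLHS]
      by_cases hspec : n = 4 ∧ t = 1
      · -- n = 4, t = 1, s = 2
        obtain ⟨hn4, ht1'⟩ := hspec
        have hsval : s = 2 := by omega
        have hPhi : Phi n s = Real.log 6 := by
          rw [hsval, hn4, Phi_eq_choose 4 2 (by norm_num)]
          norm_num [show Nat.choose 4 2 = 6 from rfl]
        have hβval : β = Real.log 6 - Real.log 4 := by
          rw [hβ, hPhi, hL, hn4, hsval]
          norm_num
        have hγval : γ = Real.log 4 / 4 := by
          rw [hγ, hL, hn4, hsval]
          norm_num
          ring
        have hlog4 : Real.log (4:ℝ) = 2 * Real.log 2 := by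
          rw [show (4:ℝ) = 2^(2:ℕ) by norm_num, Real.log_pow]
          push_cast
          ring
        have hβ3γ : β ≤ 3*γ := by
          rw [hβval, hγval]
          have h64 : Real.log ((6:ℝ)^(4:ℕ)) ≤ Real.log ((4:ℝ)^(7:ℕ)) :=
            Real.log_le_log (by norm_num) (by norm_num)
          rw [Real.log_pow, Real.log_pow] at h64
          push_cast at h64
          linarith
        have hbound := int_max_bound β γ hγ0 hβ3γ g
        have hβγval : β - γ = Real.log 6 - (5/2) * Real.log 2 := by
          rw [hβval, hγval, hlog4]
          ring
        have hmax : max 0 (β - γ) ≤ (if t = 0 then L/(n:ℝ)^2 else 0)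
            + (if t = n-2 then L/(n:ℝ)^2 else 0)
            + (if n = 4 ∧ t = 1 then Real.log 6 - (5/2)*Real.log 2 else 0) := by
          apply max_le
          · rw [hL] at hrhs1 hrhs2
            linarith
          · rw [if_pos (by exact ⟨hn4, ht1'⟩ : n = 4 ∧ t = 1)]
            rw [hβγval]
            rw [hL] at hrhs1 hrhs2
            linarith
        exact hbound.trans hmax
      · -- genuine middle: M_main applies
        have hn5 : 5 ≤ n := by omega
        have hM := M_main n s hs2 h2s hn5
        have hβγ : β ≤ γ := by
          rw [hβ, hγ]
          have halg : L * ((s:ℝ)*((n:ℝ)-s)) / (n:ℝ) + L * ((s:ℝ)*((n:ℝ)-s)) / (n:ℝ)^2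
              = L * ((s:ℝ)*((n:ℝ)-s)*((n:ℝ)+1)) / (n:ℝ)^2 := by
            field_simp
          have := hM
          rw [← hL] at this
          linarith [halg, this]
        have hbound := neg_bound β γ hγ0 hβγ g
        exact hbound.trans (add_nonneg (add_nonneg hrhs1 hrhs2) hrhs3)

lemma log32 : (2:ℝ)/5 ≤ Real.log (3/2) := by
  rw [Real.le_log_iff_exp_le (by norm_num : (0:ℝ) < 3/2)]
  have h5 : (Real.exp (2/5))^(5:ℕ) = Real.exp 2 := by
    rw [← Real.exp_nat_mul]
    norm_num
  have he2 : Real.exp 2 ≤ (3/2:ℝ)^(5:ℕ) := by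
    have h1 := Real.exp_one_lt_d9
    have h2 : Real.exp 2 = Real.exp 1 * Real.exp 1 := by
      rw [← Real.exp_add]
      norm_num
    have h3 : (0:ℝ) < Real.exp 1 := Real.exp_pos 1
    nlinarith
  by_contra hcon
  push_neg at hcon
  have hp : ((3/2:ℝ))^(5:ℕ) < (Real.exp (2/5))^(5:ℕ) := by
    apply pow_lt_pow_left₀ hcon (by norm_num) (by norm_num)
  rw [h5] at hp
  linarith

lemma endgame (n : ℕ) (hn : 2 ≤ n) :
    Real.log n/(n:ℝ)^2 + Real.log n/(n:ℝ)^2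
      + (if n = 4 then Real.log 6 - (5/2)*Real.log 2 else 0) ≤ Real.log (3/2) := by
  by_cases h2 : n = 2
  · subst h2
    rw [if_neg (by norm_num)]
    have h : Real.log ((2:ℕ):ℝ) ≤ Real.log ((3/2:ℝ)^(2:ℕ)) :=
      Real.log_le_log (by norm_num) (by norm_num)
    rw [Real.log_pow] at h
    push_cast at h ⊢
    nlinarith [h]
  by_cases h3 : n = 3
  · subst h3
    rw [if_neg (by norm_num)]
    have h : Real.log ((3:ℝ)^(2:ℕ)) ≤ Real.log ((3/2:ℝ)^(9:ℕ)) := by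
      apply Real.log_le_log (by norm_num)
      norm_num
    rw [Real.log_pow, Real.log_pow] at h
    push_cast at h ⊢
    nlinarith [h]
  by_cases h4 : n = 4
  · subst h4
    rw [if_pos rfl]
    have hlog4 : Real.log ((4:ℕ):ℝ) = 2 * Real.log 2 := by
      rw [show ((4:ℕ):ℝ) = 2^(2:ℕ) by norm_num, Real.log_pow]
      push_cast
      ring
    have hlog6 : Real.log (6:ℝ) = Real.log 2 + Real.log 3 := by
      rw [show (6:ℝ) = 2*3 by norm_num, Real.log_mul (by norm_num) (by norm_num)]
    have hlog32 : Real.log ((3:ℝ)/2) = Real.log 3 - Real.log 2 := by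
      rw [Real.log_div (by norm_num) (by norm_num)]
    have hl2 : 0 ≤ Real.log 2 := Real.log_nonneg (by norm_num)
    rw [hlog4]
    push_cast
    rw [show (3:ℝ)/2 = (3:ℝ)/2 by norm_num] at hlog32
    rw [hlog6]
    nlinarith [hlog32, hl2]
  · have hn5 : 5 ≤ n := by omega
    rw [if_neg h4]
    have hn0 : (0:ℝ) < (n:ℝ) := by exact_mod_cast (by omega : 0 < n)
    have hn5' : (5:ℝ) ≤ (n:ℝ) := by exact_mod_cast hn5
    have hL : Real.log n ≤ (n:ℝ) - 1 := by
      have := Real.log_le_sub_one_of_pos hn0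
      linarith
    have h1 : Real.log n/(n:ℝ)^2 ≤ 1/(n:ℝ) := by
      rw [div_le_div_iff₀ (by positivity) hn0]
      nlinarith
    have h2 : (1:ℝ)/(n:ℝ) ≤ 1/5 := by
      rw [div_le_div_iff₀ hn0 (by norm_num)]
      linarith
    have := log32
    linarith

lemma sum_sq_le (s : Finset ℕ) (w : ℕ → ℝ) (hw : ∀ t ∈ s, 0 ≤ w t) :
    ∑ t ∈ s, (w t)^2 ≤ (∑ t ∈ s, w t)^2 := by
  have hS : ∀ t ∈ s, w t ≤ ∑ u ∈ s, w u := by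
    intro t ht
    exact Finset.single_le_sum hw ht
  have hS0 : 0 ≤ ∑ u ∈ s, w u := Finset.sum_nonneg hw
  calc ∑ t ∈ s, (w t)^2 ≤ ∑ t ∈ s, w t * (∑ u ∈ s, w u) := by
        apply Finset.sum_le_sum
        intro t ht
        have := hw t ht
        nlinarith [hS t ht]
    _ = (∑ t ∈ s, w t)^2 := by
        rw [← Finset.sum_mul]
        ring

lemma gap_sum (a : ℕ → ℕ) (hanti : ∀ u v : ℕ, u ≤ v → a v ≤ a u) (i : ℕ) :
    ∀ j, i ≤ j → ∑ t ∈ Finset.Ico i j, ((a t - a (t+1) : ℕ):ℝ) = (a i : ℝ) - a j := by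
  intro j hj
  induction j, hj using Nat.le_induction with
  | base => simp
  | succ j hj ih =>
    rw [Finset.sum_Ico_succ_top hj, ih]
    have hcast : ((a j - a (j+1) : ℕ):ℝ) = (a j : ℝ) - a (j+1) := by
      rw [Nat.cast_sub (hanti j (j+1) (by omega))]
    rw [hcast]
    ring

lemma total_bound (n : ℕ) (hn : 2 ≤ n) (g : ℕ → ℕ) :
    ∑ t ∈ Finset.range n, ((g t:ℝ) * Aw n t
      - Real.log n * (g t:ℝ)^2 * (((t+1)*(n-(t+1)):ℕ):ℝ) / (n:ℝ)^2
      - Real.log n * (g t:ℝ) * (((t+1)*(n-(t+1)):ℕ):ℝ) / (n:ℝ))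
    ≤ Real.log (3/2) := by
  have step1 : ∑ t ∈ Finset.range n, ((g t:ℝ) * Aw n t
      - Real.log n * (g t:ℝ)^2 * (((t+1)*(n-(t+1)):ℕ):ℝ) / (n:ℝ)^2
      - Real.log n * (g t:ℝ) * (((t+1)*(n-(t+1)):ℕ):ℝ) / (n:ℝ))
      ≤ ∑ t ∈ Finset.range n, ((if t = 0 then Real.log n/(n:ℝ)^2 else 0)
        + (if t = n-2 then Real.log n/(n:ℝ)^2 else 0)
        + (if n = 4 ∧ t = 1 then Real.log 6 - (5/2)*Real.log 2 else 0)) := by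
    apply Finset.sum_le_sum
    intro t ht
    exact per_t n t hn (Finset.mem_range.mp ht) (g t)
  have split : ∑ t ∈ Finset.range n, ((if t = 0 then Real.log n/(n:ℝ)^2 else 0)
        + (if t = n-2 then Real.log n/(n:ℝ)^2 else 0)
        + (if n = 4 ∧ t = 1 then Real.log 6 - (5/2)*Real.log 2 else 0))
      = (∑ t ∈ Finset.range n, (if t = 0 then Real.log n/(n:ℝ)^2 else 0))
        + (∑ t ∈ Finset.range n, (if t = n-2 then Real.log n/(n:ℝ)^2 else 0))
        + (∑ t ∈ Finset.range n, (if n = 4 ∧ t = 1 then Real.log 6 - (5/2)*Real.log 2 else 0)) := by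
    rw [← Finset.sum_add_distrib, ← Finset.sum_add_distrib]
  have e1 : (∑ t ∈ Finset.range n, (if t = 0 then Real.log n/(n:ℝ)^2 else 0))
      = Real.log n/(n:ℝ)^2 := by
    rw [Finset.sum_ite_eq' (Finset.range n) 0 (fun _ => Real.log n/(n:ℝ)^2)]
    rw [if_pos (Finset.mem_range.mpr (by omega))]
  have e2 : (∑ t ∈ Finset.range n, (if t = n-2 then Real.log n/(n:ℝ)^2 else 0))
      = Real.log n/(n:ℝ)^2 := by
    rw [Finset.sum_ite_eq' (Finset.range n) (n-2) (fun _ => Real.log n/(n:ℝ)^2)]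
    rw [if_pos (Finset.mem_range.mpr (by omega))]
  have e3 : (∑ t ∈ Finset.range n, (if n = 4 ∧ t = 1 then Real.log 6 - (5/2)*Real.log 2 else 0))
      = (if n = 4 then Real.log 6 - (5/2)*Real.log 2 else 0) := by
    by_cases hn4 : n = 4
    · rw [if_pos hn4]
      have : ∀ t, (if n = 4 ∧ t = 1 then Real.log 6 - (5/2)*Real.log 2 else 0)
          = (if t = 1 then Real.log 6 - (5/2)*Real.log 2 else 0) := by
        intro t
        by_cases h : t = 1
        · rw [if_pos ⟨hn4, h⟩, if_pos h]
        · rw [if_neg (by tauto), if_neg h]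
      rw [Finset.sum_congr rfl (fun t _ => this t)]
      rw [Finset.sum_ite_eq' (Finset.range n) 1 (fun _ => Real.log 6 - (5/2)*Real.log 2)]
      rw [if_pos (Finset.mem_range.mpr (by omega))]
    · rw [if_neg hn4]
      apply Finset.sum_eq_zero
      intro t _
      rw [if_neg (by tauto)]
  calc ∑ t ∈ Finset.range n, ((g t:ℝ) * Aw n t
      - Real.log n * (g t:ℝ)^2 * (((t+1)*(n-(t+1)):ℕ):ℝ) / (n:ℝ)^2
      - Real.log n * (g t:ℝ) * (((t+1)*(n-(t+1)):ℕ):ℝ) / (n:ℝ))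
      ≤ _ := step1
    _ = _ := split
    _ ≤ Real.log (3/2) := by
        rw [e1, e2, e3]
        exact endgame n hn

lemma fin_Ioi_prod {n : ℕ} (i : Fin n) (h : ℕ → ℝ) :
    ∏ j ∈ Finset.Ioi i, h (j:ℕ) = ∏ j ∈ Finset.Ico ((i:ℕ)+1) n, h j := by
  apply Finset.prod_bij' (fun (j : Fin n) (_ : j ∈ Finset.Ioi i) => (j:ℕ))
    (fun (j : ℕ) (hj : j ∈ Finset.Ico ((i:ℕ)+1) n) => (⟨j, (Finset.mem_Ico.mp hj).2⟩ : Fin n))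
  · intro b hb
    have hb' := Finset.mem_Ico.mp hb
    rw [Finset.mem_Ioi]
    simp only [Fin.lt_def, Fin.val_mk]
    omega
  · intro a ha
    rfl
  · intro b hb
    rfl
  · intro a ha
    rfl
  · intro a ha
    have := Finset.mem_Ioi.mp ha
    rw [Finset.mem_Ico]
    exact ⟨this, a.isLt⟩

lemma inner_count (n t : ℕ) :
    ∑ i ∈ Finset.range (t+1), ∑ j ∈ Finset.Ico (t+1) n, (1:ℝ)
      = (((t+1)*(n-(t+1)):ℕ):ℝ) := by
  simp only [Finset.sum_const, Nat.card_Ico, Finset.card_range, nsmul_eq_mul, mul_one]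
  push_cast
  ring

theorem statement9' (n : ℕ) (hn : 2 ≤ n) (lam : Fin n → ℕ) (hanti : Antitone lam) :
    (∏ i : Fin n, ∏ j ∈ Finset.Ioi i,
        (((lam i : ℝ) - (lam j : ℝ) + ((j : ℕ) : ℝ) - ((i : ℕ) : ℝ)) /
          (((j : ℕ) : ℝ) - ((i : ℕ) : ℝ)))) ≤
      3 / 2 *
        (n : ℝ) ^
          (1 / (n : ℝ) *
            (-(∑ i, (lam i : ℝ)) ^ 2 / (n : ℝ) +
              ∑ i : Fin n,
                ((lam i : ℝ) ^ 2 +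
                  ((n : ℝ) + 1 - 2 * (((i : ℕ) : ℝ) + 1)) * (lam i : ℝ)))) := by
  classical
  have hn0 : (0:ℝ) < (n:ℝ) := by exact_mod_cast (by omega : 0 < n)
  have hL0 : 0 ≤ Real.log n := Real.log_nonneg (by exact_mod_cast (by omega : 1 ≤ n))
  set a : ℕ → ℕ := fun i => if h : i < n then lam ⟨i, h⟩ else 0 with ha
  have haval : ∀ i : Fin n, lam i = a (i:ℕ) := by
    intro i
    simp only [ha]
    rw [dif_pos i.isLt]
  have hanti' : ∀ u v : ℕ, u ≤ v → a v ≤ a u := by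
    intro u v huv
    by_cases hv : v < n
    · have hu : u < n := lt_of_le_of_lt huv hv
      simp only [ha]
      rw [dif_pos hv, dif_pos hu]
      exact hanti (Fin.mk_le_mk.mpr huv)
    · simp only [ha]
      rw [dif_neg hv]
      exact Nat.zero_le _
  set g : ℕ → ℕ := fun t => a t - a (t+1) with hg
  set F : ℕ → ℕ → ℝ := fun i j => (((a i:ℕ):ℝ) - ((a j:ℕ):ℝ) + (j:ℝ) - (i:ℝ)) / ((j:ℝ) - (i:ℝ))
    with hF
  -- convert product
  have hProd : (∏ i : Fin n, ∏ j ∈ Finset.Ioi i,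
        (((lam i : ℝ) - (lam j : ℝ) + ((j : ℕ) : ℝ) - ((i : ℕ) : ℝ)) /
          (((j : ℕ) : ℝ) - ((i : ℕ) : ℝ))))
      = ∏ i ∈ Finset.range n, ∏ j ∈ Finset.Ico (i+1) n, F i j := by
    have step1 : ∀ i : Fin n, (∏ j ∈ Finset.Ioi i,
        (((lam i : ℝ) - (lam j : ℝ) + ((j : ℕ) : ℝ) - ((i : ℕ) : ℝ)) /
          (((j : ℕ) : ℝ) - ((i : ℕ) : ℝ))))
        = ∏ j ∈ Finset.Ico ((i:ℕ)+1) n, F (i:ℕ) j := by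
      intro i
      rw [← fin_Ioi_prod i (fun j => F (i:ℕ) j)]
      apply Finset.prod_congr rfl
      intro j _
      simp only [hF]
      rw [haval i, haval j]
    calc (∏ i : Fin n, ∏ j ∈ Finset.Ioi i,
        (((lam i : ℝ) - (lam j : ℝ) + ((j : ℕ) : ℝ) - ((i : ℕ) : ℝ)) /
          (((j : ℕ) : ℝ) - ((i : ℕ) : ℝ))))
        = ∏ i : Fin n, (fun ii => ∏ j ∈ Finset.Ico (ii+1) n, F ii j) (i:ℕ) := by
          apply Finset.prod_congr rfl
          intro i _
          exact step1 i
      _ = ∏ i ∈ Finset.range n, ∏ j ∈ Finset.Ico (i+1) n, F i j :=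
          Fin.prod_univ_eq_prod_range (fun ii => ∏ j ∈ Finset.Ico (ii+1) n, F ii j) n
  rw [hProd]
  -- convert sums in exponent
  have hSum1 : ∑ i : Fin n, (lam i : ℝ) = ∑ i ∈ Finset.range n, ((a i:ℕ):ℝ) := by
    calc ∑ i : Fin n, (lam i : ℝ) = ∑ i : Fin n, (fun ii => ((a ii:ℕ):ℝ)) (i:ℕ) := by
          apply Finset.sum_congr rfl
          intro i _
          rw [haval i]
      _ = _ := Fin.sum_univ_eq_sum_range (fun ii => ((a ii:ℕ):ℝ)) n
  have hSum2 : ∑ i : Fin n, ((lam i : ℝ) ^ 2 + ((n : ℝ) + 1 - 2 * (((i : ℕ) : ℝ) + 1)) * (lam i : ℝ))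
      = ∑ i ∈ Finset.range n, (((a i:ℕ):ℝ)^2 + ((n:ℝ) + 1 - 2*((i:ℝ)+1)) * ((a i:ℕ):ℝ)) := by
    calc ∑ i : Fin n, ((lam i : ℝ) ^ 2 + ((n : ℝ) + 1 - 2 * (((i : ℕ) : ℝ) + 1)) * (lam i : ℝ))
        = ∑ i : Fin n, (fun ii => (((a ii:ℕ):ℝ)^2 + ((n:ℝ) + 1 - 2*((ii:ℝ)+1)) * ((a ii:ℕ):ℝ))) (i:ℕ) := by
          apply Finset.sum_congr rfl
          intro i _
          rw [haval i]
      _ = _ := Fin.sum_univ_eq_sum_range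
        (fun ii => (((a ii:ℕ):ℝ)^2 + ((n:ℝ) + 1 - 2*((ii:ℝ)+1)) * ((a ii:ℕ):ℝ))) n
  rw [hSum1, hSum2]
  set k : ℝ := ∑ i ∈ Finset.range n, ((a i:ℕ):ℝ) with hk
  set S2 : ℝ := ∑ i ∈ Finset.range n, ((a i:ℕ):ℝ)^2 with hS2
  set R : ℝ := ∑ i ∈ Finset.range n, ∑ j ∈ Finset.Ico (i+1) n, (((a i:ℕ):ℝ) - ((a j:ℕ):ℝ)) with hR
  set Q : ℝ := ∑ i ∈ Finset.range n, ∑ j ∈ Finset.Ico (i+1) n, (((a i:ℕ):ℝ) - ((a j:ℕ):ℝ))^2 with hQ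
  set E : ℝ := 1 / (n : ℝ) * (-k ^ 2 / (n : ℝ) +
      ∑ i ∈ Finset.range n, (((a i:ℕ):ℝ)^2 + ((n:ℝ) + 1 - 2*((i:ℝ)+1)) * ((a i:ℕ):ℝ))) with hE
  -- identities
  have hRlin : ∑ i ∈ Finset.range n, (((n:ℝ) - 1 - 2*(i:ℝ)) * ((a i:ℕ):ℝ)) = R := by
    rw [hR, ← pair_linear n (fun i => ((a i:ℕ):ℝ))]
  have hQid : Q = (n:ℝ) * S2 - k^2 := by
    have hps := pair_square n (fun i => ((a i:ℕ):ℝ))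
    rw [← hQ, ← hS2, ← hk] at hps
    linarith
  have hEid : E = (Q/(n:ℝ) + R) / (n:ℝ) := by
    rw [hE]
    have hsplit : ∑ i ∈ Finset.range n, (((a i:ℕ):ℝ)^2 + ((n:ℝ) + 1 - 2*((i:ℝ)+1)) * ((a i:ℕ):ℝ))
        = S2 + ∑ i ∈ Finset.range n, (((n:ℝ) - 1 - 2*(i:ℝ)) * ((a i:ℕ):ℝ)) := by
      rw [hS2, ← Finset.sum_add_distrib]
      apply Finset.sum_congr rfl
      intro i _
      ring
    rw [hsplit, hRlin, hQid]
    field_simp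
    ring
  -- positivity and log of product
  have hFpos : ∀ i j : ℕ, i < j → j < n → 0 < F i j := by
    intro i j hij hjn
    simp only [hF]
    have h1 : ((a j:ℕ):ℝ) ≤ ((a i:ℕ):ℝ) := by exact_mod_cast hanti' i j (le_of_lt hij)
    have h2 : (i:ℝ) < (j:ℝ) := by exact_mod_cast hij
    apply div_pos (by linarith) (by linarith)
  have hPpos : 0 < ∏ i ∈ Finset.range n, ∏ j ∈ Finset.Ico (i+1) n, F i j := by
    apply Finset.prod_pos
    intro i hi
    apply Finset.prod_pos
    intro j hj
    have hj' := Finset.mem_Ico.mp hj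
    exact hFpos i j (by omega) hj'.2
  have hlogP : Real.log (∏ i ∈ Finset.range n, ∏ j ∈ Finset.Ico (i+1) n, F i j)
      = ∑ i ∈ Finset.range n, ∑ j ∈ Finset.Ico (i+1) n, Real.log (F i j) := by
    rw [Real.log_prod]
    · apply Finset.sum_congr rfl
      intro i hi
      rw [Real.log_prod]
      intro j hj
      have hj' := Finset.mem_Ico.mp hj
      exact ne_of_gt (hFpos i j (by omega) hj'.2)
    · intro i hi
      apply ne_of_gt
      apply Finset.prod_pos
      intro j hj
      have hj' := Finset.mem_Ico.mp hj
      exact hFpos i j (by omega) hj'.2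
  -- pairwise bound
  have hpair : ∀ i j : ℕ, i < j → j < n →
      Real.log (F i j) ≤ (∑ t ∈ Finset.Ico i j, ((g t:ℕ):ℝ)) * cw i j := by
    intro i j hij hjn
    have hd1 : 1 ≤ j - i := by omega
    have haij : a j ≤ a i := hanti' i j (le_of_lt hij)
    have hnum : (((a i:ℕ):ℝ) - ((a j:ℕ):ℝ) + (j:ℝ) - (i:ℝ)) = (((a i - a j) + (j - i) : ℕ):ℝ) := by
      push_cast [Nat.cast_sub haij, Nat.cast_sub (le_of_lt hij)]
      ring
    have hden : ((j:ℝ) - (i:ℝ)) = (((j - i) : ℕ):ℝ) := by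
      push_cast [Nat.cast_sub (le_of_lt hij)]
      ring
    have hFlog : Real.log (F i j) = Real.log (((a i - a j) + (j - i) : ℕ):ℝ)
        - Real.log (((j - i) : ℕ):ℝ) := by
      simp only [hF]
      rw [hnum, hden, Real.log_div]
      · have h1 : (1:ℝ) ≤ (((a i - a j) + (j - i) : ℕ):ℝ) := by
          exact_mod_cast (by omega : 1 ≤ (a i - a j) + (j - i))
        intro hc
        rw [hc] at h1
        norm_num at h1
      · have h1 : (1:ℝ) ≤ (((j - i) : ℕ):ℝ) := by exact_mod_cast hd1
        intro hc
        rw [hc] at h1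
        norm_num at h1
    have hgap : (∑ t ∈ Finset.Ico i j, ((g t:ℕ):ℝ)) = ((a i - a j : ℕ):ℝ) := by
      have h1 := gap_sum a hanti' i j (le_of_lt hij)
      simp only [hg]
      rw [h1, Nat.cast_sub haij]
    have hcw : cw i j = Real.log ((((j-i)+1 : ℕ)):ℝ) - Real.log (((j-i):ℕ):ℝ) := by
      unfold cw
      rw [show j+1-i = (j-i)+1 from by omega]
    rw [hFlog, hgap, hcw]
    have hlr := log_ratio_le (j-i) hd1 (a i - a j)
    have c1 : ((a i - a j + (j-i) : ℕ):ℝ) = ((a i - a j:ℕ):ℝ) + ((j-i:ℕ):ℝ) := by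
      push_cast
      ring
    have c2 : (((j-i)+1 : ℕ):ℝ) = ((j-i:ℕ):ℝ) + 1 := by
      push_cast
      ring
    rw [c1, c2]
    exact hlr
  -- main chain
  have hS1 : ∑ i ∈ Finset.range n, ∑ j ∈ Finset.Ico (i+1) n, Real.log (F i j)
      ≤ ∑ i ∈ Finset.range n, ∑ j ∈ Finset.Ico (i+1) n,
          (∑ t ∈ Finset.Ico i j, ((g t:ℕ):ℝ)) * cw i j := by
    apply Finset.sum_le_sum
    intro i hi
    apply Finset.sum_le_sum
    intro j hj
    have hj' := Finset.mem_Ico.mp hj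
    exact hpair i j (by omega) hj'.2
  have hT1 : ∑ i ∈ Finset.range n, ∑ j ∈ Finset.Ico (i+1) n,
        (∑ t ∈ Finset.Ico i j, ((g t:ℕ):ℝ)) * cw i j
      = ∑ t ∈ Finset.range n, ((g t:ℕ):ℝ) * Aw n t := by
    rw [triple_swap n (fun t => ((g t:ℕ):ℝ)) cw]
    rfl
  have hRid : R = ∑ t ∈ Finset.range n, ((g t:ℕ):ℝ) * (((t+1)*(n-(t+1)):ℕ):ℝ) := by
    rw [hR]
    have e1 : ∑ i ∈ Finset.range n, ∑ j ∈ Finset.Ico (i+1) n, (((a i:ℕ):ℝ) - ((a j:ℕ):ℝ))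
        = ∑ i ∈ Finset.range n, ∑ j ∈ Finset.Ico (i+1) n,
            (∑ t ∈ Finset.Ico i j, ((g t:ℕ):ℝ)) * (fun _ _ => (1:ℝ)) i j := by
      apply Finset.sum_congr rfl
      intro i hi
      apply Finset.sum_congr rfl
      intro j hj
      have hj' := Finset.mem_Ico.mp hj
      have h1 := gap_sum a hanti' i j (by omega)
      simp only [hg]
      rw [h1]
      ring
    rw [e1, triple_swap n (fun t => ((g t:ℕ):ℝ)) (fun _ _ => (1:ℝ))]
    apply Finset.sum_congr rfl
    intro t _
    rw [inner_count n t]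
  have hQineq : ∑ t ∈ Finset.range n, ((g t:ℕ):ℝ)^2 * (((t+1)*(n-(t+1)):ℕ):ℝ) ≤ Q := by
    rw [hQ]
    have e1 : ∑ t ∈ Finset.range n, ((g t:ℕ):ℝ)^2 * (((t+1)*(n-(t+1)):ℕ):ℝ)
        = ∑ i ∈ Finset.range n, ∑ j ∈ Finset.Ico (i+1) n,
            (∑ t ∈ Finset.Ico i j, ((g t:ℕ):ℝ)^2) * (fun _ _ => (1:ℝ)) i j := by
      rw [triple_swap n (fun t => ((g t:ℕ):ℝ)^2) (fun _ _ => (1:ℝ))]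
      apply Finset.sum_congr rfl
      intro t _
      rw [inner_count n t]
    rw [e1]
    apply Finset.sum_le_sum
    intro i hi
    apply Finset.sum_le_sum
    intro j hj
    have hj' := Finset.mem_Ico.mp hj
    have h1 := gap_sum a hanti' i j (by omega)
    have hle := sum_sq_le (Finset.Ico i j) (fun t => ((g t:ℕ):ℝ))
      (fun t _ => Nat.cast_nonneg _)
    simp only [hg] at h1 ⊢
    rw [h1] at hle
    simpa using hle
  -- conclude
  have key := total_bound n hn g
  have hsplit : ∑ t ∈ Finset.range n, (((g t:ℕ):ℝ) * Aw n t
      - Real.log n * ((g t:ℕ):ℝ)^2 * (((t+1)*(n-(t+1)):ℕ):ℝ) / (n:ℝ)^2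
      - Real.log n * ((g t:ℕ):ℝ) * (((t+1)*(n-(t+1)):ℕ):ℝ) / (n:ℝ))
      = (∑ t ∈ Finset.range n, ((g t:ℕ):ℝ) * Aw n t)
        - Real.log n * (∑ t ∈ Finset.range n, ((g t:ℕ):ℝ)^2 * (((t+1)*(n-(t+1)):ℕ):ℝ))/(n:ℝ)^2
        - Real.log n * (∑ t ∈ Finset.range n, ((g t:ℕ):ℝ) * (((t+1)*(n-(t+1)):ℕ):ℝ))/(n:ℝ) := by
    rw [Finset.sum_sub_distrib, Finset.sum_sub_distrib]
    congr 1
    · congr 1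
      rw [Finset.mul_sum, Finset.sum_div]
      apply Finset.sum_congr rfl
      intro t _
      ring
    · rw [Finset.mul_sum, Finset.sum_div]
      apply Finset.sum_congr rfl
      intro t _
      ring
  rw [hsplit] at key
  have hEL : E * Real.log n = Real.log n * Q/(n:ℝ)^2 + Real.log n * R/(n:ℝ) := by
    rw [hEid]
    field_simp
  have hmono : Real.log n * (∑ t ∈ Finset.range n, ((g t:ℕ):ℝ)^2 * (((t+1)*(n-(t+1)):ℕ):ℝ))/(n:ℝ)^2
      ≤ Real.log n * Q/(n:ℝ)^2 := by
    gcongr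
  have hlog_le : Real.log (∏ i ∈ Finset.range n, ∏ j ∈ Finset.Ico (i+1) n, F i j)
      ≤ Real.log (3/2) + E * Real.log n := by
    rw [hlogP, hEL]
    have h1 := hS1
    rw [hT1] at h1
    rw [← hRid] at key
    linarith
  -- exponentiate
  have h32 : (0:ℝ) < 3/2 := by norm_num
  calc (∏ i ∈ Finset.range n, ∏ j ∈ Finset.Ico (i+1) n, F i j)
      = Real.exp (Real.log (∏ i ∈ Finset.range n, ∏ j ∈ Finset.Ico (i+1) n, F i j)) :=
        (Real.exp_log hPpos).symm
    _ ≤ Real.exp (Real.log (3/2) + E * Real.log n) := Real.exp_le_exp.mpr hlog_le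
    _ = 3/2 * (n:ℝ)^E := by
        rw [Real.exp_add, Real.exp_log h32, Real.rpow_def_of_pos hn0,
          mul_comm E (Real.log (n:ℝ))]

end AuxSU9

/-- For `n ≥ 2` and an integer partition `λ` of length `n-1` (extended by `λ_n = 0`), the
`SU(n)` Weyl dimension `D^λ = ∏_{1≤i<j≤n} (λ_i-λ_j+j-i)/(j-i)` satisfies
`D^λ ≤ (3/2)·n^{B_n(λ)}` where
`B_n(λ) = (1/n)·(-|λ|²/n + ∑_{i=1}^{n-1} (λ_i² + (n+1-2i)λ_i))`. -/
theorem statement9 (n : ℕ) (hn : 2 ≤ n) (lam : Fin n → ℕ) (hanti : Antitone lam)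
    (hlast : ∀ i : Fin n, (i : ℕ) = n - 1 → lam i = 0) :
    (∏ i : Fin n, ∏ j ∈ Finset.Ioi i,
        (((lam i : ℝ) - (lam j : ℝ) + ((j : ℕ) : ℝ) - ((i : ℕ) : ℝ)) /
          (((j : ℕ) : ℝ) - ((i : ℕ) : ℝ)))) ≤
      3 / 2 *
        (n : ℝ) ^
          (1 / (n : ℝ) *
            (-(∑ i, (lam i : ℝ)) ^ 2 / (n : ℝ) +
              ∑ i : Fin n,
                ((lam i : ℝ) ^ 2 +
                  ((n : ℝ) + 1 - 2 * (((i : ℕ) : ℝ) + 1)) * (lam i : ℝ)))) := by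
  exact statement9' n hn lam hanti
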